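/- Let ρ ∈ (0,1), and let L₁, L₂ be independent nonnegative random variables with survival functions P(L₁ > h) = (1+(1−ρ)ρh)e^{−(1−ρ)h} and P(L₂ > h) = (1+ρh)e^{−ρh}. Then P(L₁ > L₂) = ρ²(1+2ρ−2ρ²). -/

import Mathlib

open MeasureTheory Set Filter

private lemma quad_deriv (p q r b : ℝ) (t : ℝ) :
    HasDerivAt (fun t : ℝ => (p + q*t + r*t^2) * Real.exp (-(b*t)))
      ((q + 2*r*t - b*(p + q*t + r*t^2)) * Real.exp (-(b*t))) t := by
  have hlin : HasDerivAt (fun t : ℝ => -(b*t)) (-b) t := by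
    exact ((hasDerivAt_id t).const_mul b).neg.congr_deriv (by ring)
  have hexp := hlin.exp
  have hpoly : HasDerivAt (fun t : ℝ => p + q*t + r*t^2) (q + 2*r*t) t := by
    have h1 : HasDerivAt (fun t : ℝ => p + q*t) q t := by
      simpa using ((hasDerivAt_id t).const_mul q).const_add p
    have h2 : HasDerivAt (fun t : ℝ => r*t^2) (r*(2*t)) t := by
      simpa using (hasDerivAt_pow 2 t).const_mul r
    have := h1.add h2
    exact this.congr_deriv (by ring)
  have := hpoly.mul hexp
  exact this.congr_deriv (by ring)

private lemma pow_exp_tendsto (b : ℝ) (hb : 0 < b) (n : ℕ) :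
    Tendsto (fun t : ℝ => t ^ n * Real.exp (-(b*t))) atTop (nhds 0) := by
  have h := (Real.tendsto_pow_mul_exp_neg_atTop_nhds_zero n).comp
    (Filter.Tendsto.const_mul_atTop hb Filter.tendsto_id)
  have h2 := h.const_mul ((b ^ n)⁻¹)
  rw [mul_zero] at h2
  refine h2.congr fun t => ?_
  have hbn : (b:ℝ)^n ≠ 0 := pow_ne_zero n hb.ne'
  simp only [Function.comp_apply, id_eq, mul_pow]
  field_simp

private lemma quad_tendsto (p q r b : ℝ) (hb : 0 < b) :
    Tendsto (fun t : ℝ => (p + q*t + r*t^2) * Real.exp (-(b*t))) atTop (nhds 0) := by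
  have h0 := (pow_exp_tendsto b hb 0).const_mul p
  have h1 := (pow_exp_tendsto b hb 1).const_mul q
  have h2 := (pow_exp_tendsto b hb 2).const_mul r
  have h := (h0.add h1).add h2
  simp only [mul_zero, add_zero] at h
  refine h.congr fun t => ?_
  ring

private lemma one_add_mul_exp_neg_le_one (a : ℝ) : (1 + a) * Real.exp (-a) ≤ 1 := by
  have h : 1 + a ≤ Real.exp a := by linarith [Real.add_one_le_exp a]
  calc (1 + a) * Real.exp (-a) ≤ Real.exp a * Real.exp (-a) :=
        mul_le_mul_of_nonneg_right h (Real.exp_nonneg _)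
    _ = 1 := by rw [← Real.exp_add]; simp

/-- Integral of the "density" of the first survival function over `(y, ∞)`. -/
private lemma lemA (ρ : ℝ) (h0 : 0 < ρ) (h1 : ρ < 1) (y : ℝ) (hy : 0 ≤ y) :
    IntegrableOn (fun t : ℝ => ((1-ρ)^2 + (1-ρ)^2*ρ*t) * Real.exp (-((1-ρ)*t))) (Set.Ioi y)
    ∧ ∫ t in Set.Ioi y, ((1-ρ)^2 + (1-ρ)^2*ρ*t) * Real.exp (-((1-ρ)*t))
        = (1 + (1-ρ)*ρ*y) * Real.exp (-((1-ρ)*y)) := by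
  have hb : (0:ℝ) < 1 - ρ := by linarith
  have hderiv : ∀ x ∈ Set.Ici y,
      HasDerivAt (fun t : ℝ => (-1 + (-((1-ρ)*ρ))*t + 0*t^2) * Real.exp (-((1-ρ)*t)))
        (((1-ρ)^2 + (1-ρ)^2*ρ*x) * Real.exp (-((1-ρ)*x))) x := by
    intro x _
    exact (quad_deriv (-1) (-((1-ρ)*ρ)) 0 (1-ρ) x).congr_deriv (by ring)
  have hpos : ∀ x ∈ Set.Ioi y, 0 ≤ ((1-ρ)^2 + (1-ρ)^2*ρ*x) * Real.exp (-((1-ρ)*x)) := by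
    intro x hx
    have hx0 : 0 ≤ x := le_trans hy (le_of_lt hx)
    have : 0 ≤ (1-ρ)^2 + (1-ρ)^2*ρ*x := by
      nlinarith [sq_nonneg (1-ρ), mul_nonneg (mul_nonneg (sq_nonneg (1-ρ)) h0.le) hx0]
    exact mul_nonneg this (Real.exp_nonneg _)
  have htend : Tendsto (fun t : ℝ => (-1 + (-((1-ρ)*ρ))*t + 0*t^2) * Real.exp (-((1-ρ)*t)))
      atTop (nhds 0) := quad_tendsto _ _ _ _ hb
  refine ⟨integrableOn_Ioi_deriv_of_nonneg' hderiv hpos htend, ?_⟩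
  rw [integral_Ioi_of_hasDerivAt_of_nonneg' hderiv hpos htend]
  ring

/-- The main improper integral computation. -/
private lemma lemB (ρ : ℝ) (h0 : 0 < ρ) (h1 : ρ < 1) :
    IntegrableOn (fun t : ℝ => ((1-ρ)^2 + (1-ρ)^2*ρ*t) * Real.exp (-((1-ρ)*t))
        * (1 - (1 + ρ*t) * Real.exp (-(ρ*t)))) (Set.Ioi 0)
    ∧ ∫ t in Set.Ioi 0, ((1-ρ)^2 + (1-ρ)^2*ρ*t) * Real.exp (-((1-ρ)*t))
        * (1 - (1 + ρ*t) * Real.exp (-(ρ*t)))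
      = ρ^2 * (1 + 2*ρ - 2*ρ^2) := by
  have hb : (0:ℝ) < 1 - ρ := by linarith
  set p₂ : ℝ := (1-ρ)^2*(1+2*ρ+2*ρ^2) with hp₂
  set q₂ : ℝ := (1-ρ)^2*(2*ρ+2*ρ^2) with hq₂
  set r₂ : ℝ := (1-ρ)^2*ρ^2 with hr₂
  have hE : ∀ t : ℝ, Real.exp (-(1*t)) = Real.exp (-((1-ρ)*t)) * Real.exp (-(ρ*t)) := by
    intro t
    rw [← Real.exp_add]
    congr 1
    ring
  have hderiv : ∀ x ∈ Set.Ici (0:ℝ),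
      HasDerivAt (fun t : ℝ => (-1 + (-((1-ρ)*ρ))*t + 0*t^2) * Real.exp (-((1-ρ)*t))
            + (p₂ + q₂*t + r₂*t^2) * Real.exp (-(1*t)))
        (((1-ρ)^2 + (1-ρ)^2*ρ*x) * Real.exp (-((1-ρ)*x))
            * (1 - (1 + ρ*x) * Real.exp (-(ρ*x)))) x := by
    intro x _
    have h := (quad_deriv (-1) (-((1-ρ)*ρ)) 0 (1-ρ) x).add (quad_deriv p₂ q₂ r₂ 1 x)
    refine h.congr_deriv ?_
    rw [hE x, hp₂, hq₂, hr₂]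
    ring
  have hpos : ∀ x ∈ Set.Ioi (0:ℝ),
      0 ≤ ((1-ρ)^2 + (1-ρ)^2*ρ*x) * Real.exp (-((1-ρ)*x))
          * (1 - (1 + ρ*x) * Real.exp (-(ρ*x))) := by
    intro x hx
    have hx0 : (0:ℝ) ≤ x := le_of_lt hx
    have hq : 0 ≤ (1-ρ)^2 + (1-ρ)^2*ρ*x := by
      nlinarith [sq_nonneg (1-ρ), mul_nonneg (mul_nonneg (sq_nonneg (1-ρ)) h0.le) hx0]
    have hw : 0 ≤ ((1-ρ)^2 + (1-ρ)^2*ρ*x) * Real.exp (-((1-ρ)*x)) :=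
      mul_nonneg hq (Real.exp_nonneg _)
    have hle : (1 + ρ*x) * Real.exp (-(ρ*x)) ≤ 1 := one_add_mul_exp_neg_le_one (ρ*x)
    exact mul_nonneg hw (by linarith)
  have htend : Tendsto (fun t : ℝ => (-1 + (-((1-ρ)*ρ))*t + 0*t^2) * Real.exp (-((1-ρ)*t))
      + (p₂ + q₂*t + r₂*t^2) * Real.exp (-(1*t))) atTop (nhds 0) := by
    have := (quad_tendsto (-1) (-((1-ρ)*ρ)) 0 (1-ρ) hb).add
      (quad_tendsto p₂ q₂ r₂ 1 one_pos)
    simpa using this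
  refine ⟨integrableOn_Ioi_deriv_of_nonneg' hderiv hpos htend, ?_⟩
  rw [integral_Ioi_of_hasDerivAt_of_nonneg' hderiv hpos htend]
  simp only [mul_zero, add_zero, neg_zero, Real.exp_zero, mul_one, hp₂, hq₂, hr₂,
    zero_mul]
  ring

/-- If L₁, L₂ are independent nonnegative random variables with the given
survival functions, then P(L₁ > L₂) = ρ²(1+2ρ-2ρ²). -/
theorem stmt_7 (ρ : ℝ) (hρ : ρ ∈ Set.Ioo (0:ℝ) 1)
    (μ₁ μ₂ : Measure ℝ) [IsProbabilityMeasure μ₁] [IsProbabilityMeasure μ₂]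
    (h₁neg : μ₁ (Set.Iio 0) = 0) (h₂neg : μ₂ (Set.Iio 0) = 0)
    (h₁ : ∀ x : ℝ, 0 ≤ x →
      μ₁ (Set.Ioi x) = ENNReal.ofReal ((1 + (1 - ρ) * ρ * x) * Real.exp (-(1 - ρ) * x)))
    (h₂ : ∀ x : ℝ, 0 ≤ x →
      μ₂ (Set.Ioi x) = ENNReal.ofReal ((1 + ρ * x) * Real.exp (-ρ * x))) :
    (μ₁.prod μ₂) {p : ℝ × ℝ | p.2 < p.1} =
      ENNReal.ofReal (ρ ^ 2 * (1 + 2 * ρ - 2 * ρ ^ 2)) := by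
  obtain ⟨hρ0, hρ1⟩ := hρ
  have hb : (0:ℝ) < 1 - ρ := by linarith
  simp only [neg_mul] at h₁ h₂
  set w : ℝ → ℝ := fun t => ((1-ρ)^2 + (1-ρ)^2*ρ*t) * Real.exp (-((1-ρ)*t)) with hw
  have hwcont : Continuous w := by
    apply Continuous.mul
    · exact continuous_const.add (continuous_const.mul continuous_id)
    · exact Real.continuous_exp.comp (continuous_const.mul continuous_id).neg
  have hwnn : ∀ t : ℝ, 0 ≤ t → 0 ≤ w t := by
    intro t ht
    have hq : 0 ≤ (1-ρ)^2 + (1-ρ)^2*ρ*t := by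
      nlinarith [sq_nonneg (1-ρ), mul_nonneg (mul_nonneg (sq_nonneg (1-ρ)) hρ0.le) ht]
    exact mul_nonneg hq (Real.exp_nonneg _)
  have hs : MeasurableSet {p : ℝ × ℝ | p.2 < p.1} :=
    measurableSet_lt measurable_snd measurable_fst
  rw [Measure.prod_apply_symm hs]
  have hpre : ∀ y : ℝ, (fun x => (x, y)) ⁻¹' {p : ℝ × ℝ | p.2 < p.1} = Set.Ioi y :=
    fun y => rfl
  simp only [hpre]
  -- a.e. nonnegativity under μ₂
  have haey : ∀ᵐ y ∂μ₂, (0:ℝ) ≤ y := by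
    rw [ae_iff]
    have : {y : ℝ | ¬ (0:ℝ) ≤ y} = Set.Iio 0 := by
      ext y; simp [not_le]
    rw [this]; exact h₂neg
  -- Step 1 : rewrite the survival function of μ₁ as an integral
  have step1 : ∫⁻ y, μ₁ (Set.Ioi y) ∂μ₂
      = ∫⁻ y, (∫⁻ t in Set.Ioi 0,
          (Set.Ici y).indicator (fun t => ENNReal.ofReal (w t)) t) ∂μ₂ := by
    refine lintegral_congr_ae ?_
    filter_upwards [haey] with y hy
    rw [lintegral_indicator measurableSet_Ici, Measure.restrict_restrict measurableSet_Ici]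
    have hset : (Set.Ici y ∩ Set.Ioi 0 : Set ℝ) =ᵐ[volume] (Set.Ioi y : Set ℝ) := by
      rw [MeasureTheory.ae_eq_set]
    -- both differences are small
      constructor
      · have hsub : (Set.Ici y ∩ Set.Ioi 0) \ Set.Ioi y ⊆ ({y} : Set ℝ) := by
          intro t ht
          rcases ht with ⟨⟨ht1, _⟩, ht2⟩
          simp only [Set.mem_Ioi, not_lt] at ht2
          have : t = y := le_antisymm ht2 ht1
          simp [this]
        exact measure_mono_null hsub Real.volume_singleton
      · have hsub : Set.Ioi y ⊆ Set.Ici y ∩ Set.Ioi 0 :=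
          fun t (ht : y < t) => ⟨(le_of_lt ht : y ≤ t), lt_of_le_of_lt hy ht⟩
        rw [Set.diff_eq_empty.mpr hsub]
        exact measure_empty
    rw [Measure.restrict_congr_set hset]
    have hnn : 0 ≤ᵐ[volume.restrict (Set.Ioi y)] w := by
      filter_upwards [ae_restrict_mem measurableSet_Ioi] with t ht
      exact hwnn t (le_trans hy (le_of_lt ht))
    rw [← MeasureTheory.ofReal_integral_eq_lintegral_ofReal (lemA ρ hρ0 hρ1 y hy).1 hnn]
    rw [(lemA ρ hρ0 hρ1 y hy).2, h₁ y hy]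
  rw [step1]
  -- Step 2 : swap the order of integration
  have hmeasfun : Measurable (Function.uncurry fun (y t : ℝ) =>
      (Set.Ici y).indicator (fun t => ENNReal.ofReal (w t)) t) := by
    have heq : (Function.uncurry fun (y t : ℝ) =>
        (Set.Ici y).indicator (fun t => ENNReal.ofReal (w t)) t)
        = fun p : ℝ × ℝ =>
            Set.indicator {q : ℝ × ℝ | q.1 ≤ q.2} (fun q => ENNReal.ofReal (w q.2)) p := by
      funext p
      by_cases h : p.1 ≤ p.2 <;>
        simp [Function.uncurry, Set.indicator, h]
    rw [heq]
    exact Measurable.indicator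
      ((hwcont.measurable.comp measurable_snd).ennreal_ofReal)
      (measurableSet_le measurable_fst measurable_snd)
  rw [lintegral_lintegral_swap hmeasfun.aemeasurable]
  -- Step 3 : compute the inner integral
  have inner : ∀ t : ℝ,
      (∫⁻ y, (Set.Ici y).indicator (fun t => ENNReal.ofReal (w t)) t ∂μ₂)
        = ENNReal.ofReal (w t) * μ₂ (Set.Iic t) := by
    intro t
    have heq : (fun y => (Set.Ici y).indicator (fun t => ENNReal.ofReal (w t)) t)
        = (Set.Iic t).indicator (fun _ => ENNReal.ofReal (w t)) := by
      funext y
      by_cases h : y ≤ t <;> simp [Set.indicator, h]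
    rw [heq, lintegral_indicator measurableSet_Iic, setLIntegral_const]
  simp only [inner]
  -- Step 4 : substitute the CDF of μ₂ and conclude
  have step3 : ∫⁻ t in Set.Ioi 0, ENNReal.ofReal (w t) * μ₂ (Set.Iic t)
      = ∫⁻ t in Set.Ioi 0,
          ENNReal.ofReal (w t * (1 - (1 + ρ*t) * Real.exp (-(ρ*t)))) := by
    refine setLIntegral_congr_fun measurableSet_Ioi (fun t ht => ?_)
    have ht0 : (0:ℝ) ≤ t := le_of_lt ht
    have hIic : μ₂ (Set.Iic t) = 1 - μ₂ (Set.Ioi t) := by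
      rw [← Set.compl_Ioi, measure_compl measurableSet_Ioi (measure_ne_top _ _), measure_univ]
    have h0f : 0 ≤ (1 + ρ*t) * Real.exp (-(ρ*t)) :=
      mul_nonneg (by nlinarith) (Real.exp_nonneg _)
    rw [hIic, h₂ t ht0, ← ENNReal.ofReal_one, ← ENNReal.ofReal_sub _ h0f,
      ← ENNReal.ofReal_mul (hwnn t ht0)]
  rw [step3]
  rw [← MeasureTheory.ofReal_integral_eq_lintegral_ofReal (lemB ρ hρ0 hρ1).1 ?_]
  · rw [(lemB ρ hρ0 hρ1).2]
  · filter_upwards [ae_restrict_mem measurableSet_Ioi] with t ht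
    have ht0 : (0:ℝ) ≤ t := le_of_lt ht
    have hle : (1 + ρ*t) * Real.exp (-(ρ*t)) ≤ 1 := one_add_mul_exp_neg_le_one (ρ*t)
    exact mul_nonneg (hwnn t ht0) (by linarith)
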